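/- Let ℙ be a stationary simple point process on ℝ^d such that ‖ℙ(ξ(Λ_{1/2}) = 0 | 𝒯_k) − ℙ(ξ(Λ_{1/2}) = 0)‖_∞ → 0 as k → ∞, where 𝒯_k is the σ-algebra generated by ξ outside Λ_k, and ℙ(ξ = ∅) = 0. Then there exists c > 0 such that ℙ(ξ(Λ_ℓ) = 0) ≤ e^{-cℓ^d} for all ℓ ≥ 1. -/

import Mathlib

open MeasureTheory ENNReal
noncomputable section

abbrev E (d : ℕ) : Type := EuclideanSpace ℝ (Fin d)

def locFin {d : ℕ} (ξ : Set (E d)) : Prop := ∀ r : ℝ, (ξ ∩ Metric.closedBall 0 r).Finite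

def shift {d : ℕ} (x : E d) (s : Set (E d)) : Set (E d) := (fun y => y - x) '' s

def lam0 {d : ℕ} (ℓ : ℝ) : Set (E d) := {y | ∀ i, |y i| ≤ ℓ}

/-- The σ-algebra `𝒯_a` of events determined by the configuration outside `Λ_a`. -/
def tailSigma (d : ℕ) [m0 : MeasurableSpace (Set (E d))] (a : ℝ) :
    MeasurableSpace (Set (E d)) :=
  MeasurableSpace.comap (fun s : Set (E d) => s ∩ (lam0 a)ᶜ) m0

/-- Indicator of the void event `ξ(Λ_{1/2}) = 0`. -/
def voidInd {d : ℕ} (s : Set (E d)) : ℝ := Set.indicator {s : Set (E d) | s ∩ lam0 (1/2) = ∅} (fun _ => 1) s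

namespace St12

variable {d : ℕ}

/-- integer point as an element of `E d` -/
def emb (z : Fin d → ℤ) : E d := WithLp.toLp 2 (fun i => (z i : ℝ))

@[simp] lemma emb_apply (z : Fin d → ℤ) (i : Fin d) : emb z i = (z i : ℝ) := rfl

/-- closed unit box centered at the integer point `z` -/
def box (z : Fin d → ℤ) : Set (E d) := {y | ∀ i, |y i - (z i : ℝ)| ≤ 1/2}

/-- void event for a region -/
def Vv (W : Set (E d)) : Set (Set (E d)) := {s | s ∩ W = ∅}

/-- void event for a family of integer boxes -/
def Ev (Y : Set (Fin d → ℤ)) : Set (Set (E d)) := {s | ∀ z ∈ Y, s ∩ box z = ∅}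

lemma mem_Vv {W : Set (E d)} {s : Set (E d)} : s ∈ Vv W ↔ ∀ y ∈ s, y ∉ W := by
  simp only [Vv, Set.mem_setOf_eq, Set.eq_empty_iff_forall_notMem, Set.mem_inter_iff, not_and]

lemma mem_shift {x : E d} {s : Set (E d)} {y : E d} : y ∈ shift x s ↔ y + x ∈ s := by
  constructor
  · rintro ⟨u, hu, rfl⟩; simpa using hu
  · intro h; exact ⟨y + x, h, add_sub_cancel_right y x⟩

lemma lam0_mono {a b : ℝ} (h : a ≤ b) : (lam0 a : Set (E d)) ⊆ lam0 b :=
  fun y hy i => le_trans (hy i) h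

lemma box_zero : box (0 : Fin d → ℤ) = (lam0 (1/2) : Set (E d)) := by
  ext y; simp [box, lam0]

lemma shift_inter_box_empty (x z : Fin d → ℤ) (s : Set (E d)) :
    shift (emb x) s ∩ box z = ∅ ↔ s ∩ box (z + x) = ∅ := by
  simp only [Set.eq_empty_iff_forall_notMem, Set.mem_inter_iff, not_and]
  constructor
  · intro h u hu hub
    refine h (u - emb x) (by rw [mem_shift]; simpa using hu) ?_
    intro i
    have := hub i
    simpa [PiLp.sub_apply, Pi.add_apply, sub_sub, add_comm] using this
  · intro h y hy hyb
    refine h (y + emb x) (mem_shift.mp hy) ?_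
    intro i
    have := hyb i
    simp only [PiLp.add_apply, emb_apply, Pi.add_apply, Int.cast_add, box, Set.mem_setOf_eq] at this ⊢
    calc |y i + (x i : ℝ) - ((z i : ℝ) + (x i : ℝ))| = |y i - (z i : ℝ)| := by ring_nf
    _ ≤ 1/2 := this

lemma shift_preimage_Ev (x : Fin d → ℤ) (Y : Set (Fin d → ℤ)) :
    (shift (emb x)) ⁻¹' (Ev Y) = Ev ((· + x) '' Y) := by
  ext s
  simp only [Set.mem_preimage, Ev, Set.mem_setOf_eq, Set.forall_mem_image]
  exact forall₂_congr fun z _ => shift_inter_box_empty x z s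

lemma Ev_anti {Y Y' : Set (Fin d → ℤ)} (h : Y ⊆ Y') : Ev Y' ⊆ Ev Y :=
  fun s hs z hz => hs z (h hz)

lemma Ev_union (Y Y' : Set (Fin d → ℤ)) : Ev (Y ∪ Y') = Ev Y ∩ Ev Y' := by
  ext s; simp only [Ev, Set.mem_setOf_eq, Set.mem_union, Set.mem_inter_iff]
  constructor
  · intro h; exact ⟨fun z hz => h z (Or.inl hz), fun z hz => h z (Or.inr hz)⟩
  · rintro ⟨h1, h2⟩ z (hz | hz); exacts [h1 z hz, h2 z hz]

lemma Ev_eq_biInter (Y : Set (Fin d → ℤ)) : Ev Y = ⋂ z ∈ Y, Vv (box z) := by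
  ext s; simp [Ev, Vv]

end St12

namespace St12

variable {d : ℕ}

/-- the void event of `box z` is the shift-preimage of the central void event -/
lemma Vv_box_eq_preimage (z : Fin d → ℤ) :
    Vv (box z) = (shift (emb z)) ⁻¹' (Vv (lam0 (1/2) : Set (E d))) := by
  have h := shift_preimage_Ev z {0}
  simp only [Set.image_singleton, zero_add] at h
  have h1 : Ev {(0 : Fin d → ℤ)} = Vv (box 0) := by
    ext s; simp [Ev, Vv]
  have h2 : Ev {z} = Vv (box z) := by ext s; simp [Ev, Vv]
  rw [← box_zero, ← h1, ← h2, ← h]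

/-- one-dimensional clamped rounding -/
lemma clamp_coord (K' : ℕ) (t : ℝ) (ht : |t| ≤ (K' : ℝ) + 1/2) :
    ∃ w : ℤ, |w| ≤ (K' : ℤ) ∧ |t - (w : ℝ)| ≤ 1/2 := by
  have hr := abs_sub_round t
  have ht1 := abs_le.mp ht
  have hr1 := abs_le.mp hr
  rcases le_or_gt (round t) (-(K' : ℤ)) with h1 | h1
  · refine ⟨-(K' : ℤ), by simp, ?_⟩
    have h1' : (round t : ℝ) ≤ -(K' : ℝ) := by exact_mod_cast h1
    push_cast
    rw [abs_le]; constructor <;> linarith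
  · rcases le_or_gt ((K' : ℤ)) (round t) with h2 | h2
    · refine ⟨(K' : ℤ), by simp, ?_⟩
      have h2' : ((K' : ℝ)) ≤ (round t : ℝ) := by exact_mod_cast h2
      push_cast
      rw [abs_le]; constructor <;> linarith
    · exact ⟨round t, by rw [abs_le]; omega, hr⟩

/-- clamped rounding: covering the box `lam0 (K'+1/2)` by unit boxes -/
lemma clamp_cover (K' : ℕ) (u : E d) (hu : u ∈ (lam0 ((K' : ℝ) + 1/2) : Set (E d))) :
    ∃ w : Fin d → ℤ, (∀ i, |w i| ≤ (K' : ℤ)) ∧ u ∈ box w := by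
  choose w hw1 hw2 using fun i => clamp_coord K' (u i) (hu i)
  exact ⟨w, hw1, hw2⟩

/-- every point lies in some integer box -/
lemma round_cover (u : E d) : ∃ w : Fin d → ℤ, u ∈ box w :=
  ⟨fun i => round (u i), fun i => abs_sub_round (u i)⟩

/-- far boxes avoid the central box `lam0 k` -/
lemma box_disjoint_lam0 {K' : ℕ} {k : ℝ} (hk : k ≤ (K' : ℝ) + 1) {z : Fin d → ℤ}
    (hz : ∃ i, (K' : ℤ) + 2 ≤ |z i|) : box z ∩ (lam0 k : Set (E d)) = ∅ := by
  obtain ⟨i, hi⟩ := hz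
  rw [Set.eq_empty_iff_forall_notMem]
  rintro u ⟨hub, hul⟩
  have h1 : |u i - (z i : ℝ)| ≤ 1/2 := hub i
  have h2 : |u i| ≤ k := hul i
  have h3 : ((K' : ℝ)) + 2 ≤ |(z i : ℝ)| := by
    rw [← Int.cast_abs]; exact_mod_cast hi
  have h4 : |(z i : ℝ)| ≤ |u i - (z i : ℝ)| + |u i| := by
    have := abs_sub_abs_le_abs_sub (z i : ℝ) (u i)
    have h5 := abs_sub_comm (z i : ℝ) (u i)
    linarith [abs_nonneg (u i), le_abs_self (|(z i:ℝ)| - |u i|)]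
  linarith

/-- the central covering: void of all near boxes implies void of `lam0 (K'+1/2)` -/
lemma Ev_nbhd_subset (K' : ℕ) :
    Ev {w : Fin d → ℤ | ∀ i, |w i| ≤ (K' : ℤ)} ⊆ Vv (lam0 ((K' : ℝ) + 1/2) : Set (E d)) := by
  intro s hs
  rw [mem_Vv]
  intro u hu hul
  obtain ⟨w, hw1, hw2⟩ := clamp_cover K' u hul
  have := hs w hw1
  rw [Set.eq_empty_iff_forall_notMem] at this
  exact this u ⟨hu, hw2⟩

end St12

namespace St12

variable {d : ℕ} [m0 : MeasurableSpace (Set (E d))]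

lemma aem (P : Measure (Set (E d))) [IsProbabilityMeasure P]
    (hstat : ∀ x : E d, Measure.map (shift x) P = P) (x : E d) :
    AEMeasurable (shift x) P := by
  by_contra h
  have h0 := Measure.map_of_not_aemeasurable h
  rw [hstat x] at h0
  exact IsProbabilityMeasure.ne_zero P h0

lemma shift_meas_eq (P : Measure (Set (E d))) [IsProbabilityMeasure P]
    (hstat : ∀ x : E d, Measure.map (shift x) P = P) (x : E d)
    {B : Set (Set (E d))} (hB : NullMeasurableSet B P) :
    P ((shift x) ⁻¹' B) = P B := by
  have hB' : NullMeasurableSet B (Measure.map (shift x) P) := by rw [hstat x]; exact hB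
  rw [← Measure.map_apply₀ (aem P hstat x) hB', hstat x]

lemma nm_shift_preimage (P : Measure (Set (E d))) [IsProbabilityMeasure P]
    (hstat : ∀ x : E d, Measure.map (shift x) P = P) (x : E d)
    {B : Set (Set (E d))} (hB : NullMeasurableSet B P) :
    NullMeasurableSet ((shift x) ⁻¹' B) P := by
  obtain ⟨C, hCsub, hCm, hCe⟩ := hB.exists_measurable_subset_ae_eq
  have hd : P (B \ C) = 0 := (ae_eq_set.mp hCe).2
  set N := toMeasurable P (B \ C) with hN
  have hNm : MeasurableSet N := measurableSet_toMeasurable _ _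
  have hN0 : P N = 0 := by rw [hN, measure_toMeasurable]; exact hd
  set ρ := (aem P hstat x).mk (shift x) with hρ
  have hρm : Measurable ρ := (aem P hstat x).measurable_mk
  have hρe : shift x =ᵐ[P] ρ := (aem P hstat x).ae_eq_mk
  have hbad1 : P {s | shift x s ≠ ρ s} = 0 := hρe
  have hmapρ : Measure.map ρ P = P := by
    rw [← Measure.map_congr hρe, hstat x]
  have hbad2 : P (ρ ⁻¹' N) = 0 := by
    rw [← Measure.map_apply hρm hNm, hmapρ]; exact hN0
  have hsub1 : ((shift x) ⁻¹' B) \ (ρ ⁻¹' C) ⊆ {s | shift x s ≠ ρ s} ∪ (ρ ⁻¹' N) := by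
    rintro s ⟨hs1, hs2⟩
    by_cases he : shift x s = ρ s
    · right
      refine Set.mem_preimage.mpr (subset_toMeasurable P _ ?_)
      exact ⟨by rw [← he]; exact hs1, hs2⟩
    · exact Or.inl he
  have hsub2 : (ρ ⁻¹' C) \ ((shift x) ⁻¹' B) ⊆ {s | shift x s ≠ ρ s} := by
    rintro s ⟨hs1, hs2⟩
    intro he
    exact hs2 (Set.mem_preimage.mpr (by rw [he]; exact hCsub hs1))
  have hae : (ρ ⁻¹' C) =ᵐ[P] ((shift x) ⁻¹' B) := by
    rw [ae_eq_set]
    constructor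
    · exact measure_mono_null hsub2 hbad1
    · exact measure_mono_null hsub1 (measure_union_null hbad1 hbad2)
  exact ((hρm hCm).nullMeasurableSet).congr hae

end St12

namespace St12

variable {d : ℕ} [m0 : MeasurableSpace (Set (E d))]

/-- the central void event -/
abbrev Vc (d : ℕ) : Set (Set (E d)) := Vv (lam0 (1/2) : Set (E d))

section Ctx

variable (P : Measure (Set (E d))) [IsProbabilityMeasure P]
  (hstat : ∀ x : E d, Measure.map (shift x) P = P)
  {C : Set (Set (E d))} (hCm : MeasurableSet C) (hCe : C =ᵐ[P] Vc d)

include hCm hCe in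
omit [IsProbabilityMeasure P] in
lemma nm_V : NullMeasurableSet (Vc d) P :=
  hCm.nullMeasurableSet.congr hCe

include hstat hCm hCe in
lemma nm_A (z : Fin d → ℤ) : NullMeasurableSet (Vv (box z)) P := by
  rw [Vv_box_eq_preimage]
  exact nm_shift_preimage P hstat _ (nm_V P hCm hCe)

include hstat hCm hCe in
lemma nm_Ev (Y : Set (Fin d → ℤ)) : NullMeasurableSet (Ev Y) P := by
  rw [Ev_eq_biInter]
  exact NullMeasurableSet.biInter (Set.to_countable Y)
    (fun z _ => nm_A P hstat hCm hCe z)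

variable {k : ℝ} (hm : tailSigma d k ≤ m0) (hint : Integrable voidInd P)
  {γ : ℝ}
  (hφ : ∀ᵐ s ∂P, (MeasureTheory.condExp (tailSigma d k) P voidInd) s ≤ γ)

include hCm hCe hm hint hφ in
/-- the conditional-probability bound against genuinely tail-measurable sets -/
lemma core_bound {S : Set (Set (E d))} (hS : MeasurableSet[tailSigma d k] S) :
    P (Vc d ∩ S) ≤ ENNReal.ofReal (γ * (P S).toReal) := by
  have hVC : P ((Vc d) \ C) = 0 := (ae_eq_set.mp hCe).2
  have hCV : P (C \ (Vc d)) = 0 := (ae_eq_set.mp hCe).1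
  have h1 : P (((Vc d ∩ S) \ (C ∩ S) : Set (Set (E d)))) = 0 := by
    refine measure_mono_null ?_ hVC
    rintro s ⟨⟨ha, hb⟩, h2⟩; exact ⟨ha, fun hc => h2 ⟨hc, hb⟩⟩
  have h2 : P (((C ∩ S) \ (Vc d ∩ S) : Set (Set (E d)))) = 0 := by
    refine measure_mono_null ?_ hCV
    rintro s ⟨⟨ha, hb⟩, h2⟩; exact ⟨ha, fun hv => h2 ⟨hv, hb⟩⟩
  have hPeq : P (Vc d ∩ S) = P (C ∩ S) := measure_congr (ae_eq_set.mpr ⟨h1, h2⟩)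
  have h3 : ∀ᵐ s ∂P, s ∉ (((Vc d \ C) ∪ (C \ Vc d)) : Set (Set (E d))) := by
    rw [ae_iff]
    have he : {s | ¬ s ∉ (((Vc d \ C) ∪ (C \ Vc d)) : Set (Set (E d)))}
        = (((Vc d \ C) ∪ (C \ Vc d)) : Set (Set (E d))) := by
      ext s; simp only [Set.mem_setOf_eq, not_not]
    rw [he]
    exact measure_union_null hVC hCV
  have hv : ∀ᵐ s ∂P, voidInd s = Set.indicator C (fun _ => (1:ℝ)) s := by
    filter_upwards [h3] with s hs
    by_cases hsv : s ∈ Vc d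
    · have hsc : s ∈ C := by by_contra hc; exact hs (Or.inl ⟨hsv, hc⟩)
      have e1 : voidInd s = 1 := Set.indicator_of_mem hsv _
      have e2 : Set.indicator C (fun _ => (1:ℝ)) s = 1 := Set.indicator_of_mem hsc _
      rw [e1, e2]
    · have hsc : s ∉ C := fun hc => hs (Or.inr ⟨hc, hsv⟩)
      have e1 : voidInd s = 0 := Set.indicator_of_notMem hsv _
      have e2 : Set.indicator C (fun _ => (1:ℝ)) s = 0 := Set.indicator_of_notMem hsc _
      rw [e1, e2]
  have hIeq : ∫ s in S, voidInd s ∂P = (P (C ∩ S)).toReal := by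
    have e1 : ∫ s in S, voidInd s ∂P = ∫ s in S, Set.indicator C (fun _ => (1:ℝ)) s ∂P :=
      integral_congr_ae (ae_restrict_of_ae hv)
    rw [e1, integral_indicator_const (1:ℝ) hCm, measureReal_restrict_apply hCm, measureReal_def, smul_eq_mul, mul_one]
  have hcond : ∫ s in S, voidInd s ∂P
      = ∫ s in S, (MeasureTheory.condExp (tailSigma d k) P voidInd) s ∂P :=
    (setIntegral_condExp hm hint hS).symm
  have hmono : ∫ s in S, (MeasureTheory.condExp (tailSigma d k) P voidInd) s ∂P
      ≤ γ * (P S).toReal := by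
    calc ∫ s in S, (MeasureTheory.condExp (tailSigma d k) P voidInd) s ∂P
        ≤ ∫ _ in S, γ ∂P := setIntegral_mono_ae_restrict
          (integrable_condExp.integrableOn)
          (integrableOn_const (measure_lt_top P S).ne)
          (ae_restrict_of_ae hφ)
      _ = (P S).toReal • γ := setIntegral_const γ
      _ = γ * (P S).toReal := by rw [smul_eq_mul, mul_comm]
  have hkey : (P (C ∩ S)).toReal ≤ γ * (P S).toReal := by
    rw [← hIeq]; rw [hcond]; exact hmono
  rw [hPeq]
  calc P (C ∩ S) = ENNReal.ofReal ((P (C ∩ S)).toReal) :=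
        (ENNReal.ofReal_toReal (measure_ne_top _ _)).symm
    _ ≤ ENNReal.ofReal (γ * (P S).toReal) := ENNReal.ofReal_le_ofReal hkey

end Ctx

end St12

namespace St12

variable {d : ℕ} [m0 : MeasurableSpace (Set (E d))]

section Step

variable (P : Measure (Set (E d))) [IsProbabilityMeasure P]
  (hstat : ∀ x : E d, Measure.map (shift x) P = P)
  {C : Set (Set (E d))} (hCm : MeasurableSet C) (hCe : C =ᵐ[P] Vc d)
  {k : ℝ} (hm : tailSigma d k ≤ m0) (hint : Integrable voidInd P)
  {γ : ℝ} (hγ0 : 0 ≤ γ)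
  (hφ : ∀ᵐ s ∂P, (MeasureTheory.condExp (tailSigma d k) P voidInd) s ≤ γ)
  {K' : ℕ} (hkK' : k ≤ (K' : ℝ))

include hstat hCm hCe hm hint hγ0 hφ hkK' in
/-- the key one-step conditioning estimate -/
lemma step (Y : Set (Fin d → ℤ)) (hfar : ∀ z ∈ Y, ∃ i, (K' : ℤ) + 2 ≤ |z i|) :
    P (Vv (lam0 ((K' : ℝ) + 1/2)) ∩ Ev Y) ≤ ENNReal.ofReal γ * P (Ev Y) := by
  obtain ⟨G, hGsub, hGm, hGe⟩ := (nm_Ev P hstat hCm hCe Y).exists_measurable_subset_ae_eq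
  have hRG : P ((Ev Y) \ G) = 0 := (ae_eq_set.mp hGe).2
  set g : Set (E d) → Set (E d) := fun s => s ∩ (lam0 k)ᶜ with hg
  have hS : MeasurableSet[tailSigma d k] (g ⁻¹' G) := ⟨G, hGm, rfl⟩
  -- boxes of Y avoid lam0 k
  have hbox : ∀ z ∈ Y, box z ∩ (lam0 k : Set (E d)) = ∅ := fun z hz =>
    box_disjoint_lam0 (le_trans hkK' (by linarith)) (hfar z hz)
  -- saturation : g ⁻¹' (Ev Y) = Ev Y
  have hsat : g ⁻¹' (Ev Y) = Ev Y := by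
    ext s
    simp only [Set.mem_preimage, Ev, Set.mem_setOf_eq, hg]
    refine forall₂_congr fun z hz => ?_
    have hb := hbox z hz
    rw [Set.eq_empty_iff_forall_notMem, Set.eq_empty_iff_forall_notMem]
    constructor
    · intro h u hu
      rcases hu with ⟨hus, hub⟩
      refine h u ⟨⟨hus, ?_⟩, hub⟩
      intro hul
      rw [Set.eq_empty_iff_forall_notMem] at hb
      exact hb u ⟨hub, hul⟩
    · rintro h u ⟨⟨hus, _⟩, hub⟩
      exact h u ⟨hus, hub⟩
  -- decomposition
  have hdec : Vv (lam0 ((K' : ℝ) + 1/2)) ∩ Ev Y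
      ⊆ (Vc d ∩ (g ⁻¹' G)) ∪ ((Ev Y) \ G) := by
    rintro s ⟨hsZ, hsR⟩
    have hfix : g s = s := by
      rw [hg]
      apply Set.inter_eq_self_of_subset_left
      intro u hu hul
      have hsZ' := hsZ
      rw [Vv, Set.mem_setOf_eq, Set.eq_empty_iff_forall_notMem] at hsZ'
      exact hsZ' u ⟨hu, lam0_mono (by linarith) hul⟩
    by_cases hsG : s ∈ G
    · left
      refine ⟨?_, by rw [Set.mem_preimage, hfix]; exact hsG⟩
      rw [mem_Vv]
      intro u hu hul
      rw [Vv, Set.mem_setOf_eq, Set.eq_empty_iff_forall_notMem] at hsZ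
      have h05 : (1/2 : ℝ) ≤ (K' : ℝ) + 1/2 := by have : (0:ℝ) ≤ (K' : ℝ) := Nat.cast_nonneg _; linarith
      exact hsZ u ⟨hu, lam0_mono h05 hul⟩
    · exact Or.inr ⟨hsR, hsG⟩
  have hGR : g ⁻¹' G ⊆ Ev Y := by
    rw [← hsat]; exact Set.preimage_mono hGsub
  calc P (Vv (lam0 ((K' : ℝ) + 1/2)) ∩ Ev Y)
      ≤ P ((Vc d ∩ (g ⁻¹' G)) ∪ ((Ev Y) \ G)) := measure_mono hdec
    _ ≤ P (Vc d ∩ (g ⁻¹' G)) + P ((Ev Y) \ G) := measure_union_le _ _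
    _ = P (Vc d ∩ (g ⁻¹' G)) := by rw [hRG, add_zero]
    _ ≤ ENNReal.ofReal (γ * (P (g ⁻¹' G)).toReal) := core_bound P hCm hCe hm hint hφ hS
    _ = ENNReal.ofReal γ * ENNReal.ofReal ((P (g ⁻¹' G)).toReal) := ENNReal.ofReal_mul hγ0
    _ = ENNReal.ofReal γ * P (g ⁻¹' G) := by rw [ENNReal.ofReal_toReal (measure_ne_top _ _)]
    _ ≤ ENNReal.ofReal γ * P (Ev Y) := mul_le_mul_right (measure_mono hGR) _

end Step

end St12

namespace St12

variable {d : ℕ} [m0 : MeasurableSpace (Set (E d))]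

section Rec

variable (P : Measure (Set (E d))) [IsProbabilityMeasure P]
  (hstat : ∀ x : E d, Measure.map (shift x) P = P)
  {C : Set (Set (E d))} (hCm : MeasurableSet C) (hCe : C =ᵐ[P] Vc d)
  {k : ℝ} (hm : tailSigma d k ≤ m0) (hint : Integrable voidInd P)
  {γ : ℝ} (hγ0 : 0 ≤ γ)
  (hφ : ∀ᵐ s ∂P, (MeasureTheory.condExp (tailSigma d k) P voidInd) s ≤ γ)
  {K' : ℕ} (hkK' : k ≤ (K' : ℝ))

include hstat hCm hCe hm hint hγ0 hφ hkK' in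
/-- iterated conditioning over a separated family of peel points -/
lemma recursion (n : ℕ) : ∀ (F : Finset (Fin d → ℤ)) (T : Set (Fin d → ℤ)),
    F.card = n →
    (∀ x ∈ F, ∀ y ∈ F, x ≠ y → ∃ i, 2 * (K' : ℤ) + 3 ≤ |x i - y i|) →
    (∀ x ∈ F, ∀ w : Fin d → ℤ, (∀ i, |w i - x i| ≤ (K' : ℤ)) → w ∈ T) →
    P (Ev T) ≤ (ENNReal.ofReal γ) ^ n := by
  induction n with
  | zero =>
    intro F T _ _ _
    simpa using (prob_le_one : P (Ev T) ≤ 1)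
  | succ n ih =>
    intro F T hcard hsep hnb
    obtain ⟨x, F', hxF', rfl, hcard'⟩ := Finset.card_eq_succ.mp hcard
    have hxmem : x ∈ insert x F' := Finset.mem_insert_self x F'
    -- remaining available boxes
    set T'' : Set (Fin d → ℤ) := {z | z ∈ T ∧ ∃ i, (K' : ℤ) + 2 ≤ |z i - x i|} with hT''
    -- near neighbourhood of x
    set nb : Set (Fin d → ℤ) := {w | ∀ i, |w i - x i| ≤ (K' : ℤ)} with hnbd
    -- both are inside T
    have hsubT : nb ∪ T'' ⊆ T := by
      rintro w (hw | hw)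
      · exact hnb x hxmem w hw
      · exact hw.1
    have hmono1 : Ev T ⊆ Ev (nb ∪ T'') := Ev_anti hsubT
    -- recenter at x
    have hrec1 : Ev (nb ∪ T'') = (shift (emb x)) ⁻¹' (Ev ((· - x) '' (nb ∪ T''))) := by
      rw [shift_preimage_Ev]
      congr 1
      rw [Set.image_image]
      simp only [sub_add_cancel, Set.image_id']
    set Y₀ : Set (Fin d → ℤ) := (· - x) '' (nb ∪ T'') with hY₀
    have hPrec1 : P (Ev (nb ∪ T'')) = P (Ev Y₀) := by
      rw [hrec1]
      exact shift_meas_eq P hstat _ (nm_Ev P hstat hCm hCe _)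
    -- split the recentered configuration
    have hY₀split : Y₀ = ((· - x) '' nb) ∪ ((· - x) '' T'') := Set.image_union _ _ _
    have hnb0 : ((· - x) '' nb) = {w : Fin d → ℤ | ∀ i, |w i| ≤ (K' : ℤ)} := by
      ext w
      constructor
      · rintro ⟨v, hv, rfl⟩ i
        simpa using hv i
      · intro hw
        exact ⟨w + x, fun i => by simpa using hw i, by simp⟩
    set Y₁ : Set (Fin d → ℤ) := (· - x) '' T'' with hY₁
    have hEvY₀ : Ev Y₀ ⊆ Vv (lam0 ((K' : ℝ) + 1/2)) ∩ Ev Y₁ := by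
      rw [hY₀split, Ev_union, hnb0]
      exact Set.inter_subset_inter_left _ (Ev_nbhd_subset K')
    have hfar : ∀ z ∈ Y₁, ∃ i, (K' : ℤ) + 2 ≤ |z i| := by
      rintro z ⟨t, ht, rfl⟩
      obtain ⟨i, hi⟩ := ht.2
      exact ⟨i, by simpa using hi⟩
    -- un-recenter the far part
    have hrec2 : Ev T'' = (shift (emb x)) ⁻¹' (Ev Y₁) := by
      rw [shift_preimage_Ev, hY₁, Set.image_image]
      simp only [sub_add_cancel, Set.image_id']
    have hPrec2 : P (Ev Y₁) = P (Ev T'') := by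
      rw [← shift_meas_eq P hstat (emb x) (nm_Ev P hstat hCm hCe Y₁), ← hrec2]
    -- induction hypothesis on T''
    have hsep' : ∀ a ∈ F', ∀ b ∈ F', a ≠ b → ∃ i, 2 * (K' : ℤ) + 3 ≤ |a i - b i| :=
      fun a ha b hb hab =>
        hsep a (Finset.mem_insert_of_mem ha) b (Finset.mem_insert_of_mem hb) hab
    have hnb' : ∀ y ∈ F', ∀ w : Fin d → ℤ, (∀ i, |w i - y i| ≤ (K' : ℤ)) → w ∈ T'' := by
      intro y hy w hw
      have hyx : y ≠ x := fun h => hxF' (h ▸ hy)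
      constructor
      · exact hnb y (Finset.mem_insert_of_mem hy) w hw
      · obtain ⟨i, hi⟩ := hsep y (Finset.mem_insert_of_mem hy) x hxmem hyx
        refine ⟨i, ?_⟩
        have h1 := hw i
        have h2 : |y i - x i| ≤ |y i - w i| + |w i - x i| := abs_sub_le _ _ _
        have h3 : |y i - w i| = |w i - y i| := abs_sub_comm _ _
        omega
    have hih := ih F' T'' hcard' hsep' hnb'
    -- combine
    calc P (Ev T) ≤ P (Ev (nb ∪ T'')) := measure_mono hmono1
      _ = P (Ev Y₀) := hPrec1
      _ ≤ P (Vv (lam0 ((K' : ℝ) + 1/2)) ∩ Ev Y₁) := measure_mono hEvY₀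
      _ ≤ ENNReal.ofReal γ * P (Ev Y₁) :=
          step P hstat hCm hCe hm hint hγ0 hφ hkK' Y₁ hfar
      _ = ENNReal.ofReal γ * P (Ev T'') := by rw [hPrec2]
      _ ≤ ENNReal.ofReal γ * (ENNReal.ofReal γ) ^ n := mul_le_mul_right hih _
      _ = (ENNReal.ofReal γ) ^ (n + 1) := (pow_succ' _ _).symm

end Rec

end St12

namespace St12

variable {d : ℕ} [m0 : MeasurableSpace (Set (E d))]

lemma force (P : Measure (Set (E d))) [IsProbabilityMeasure P] {k q ε : ℝ}
    (hq : 0 < q) (hε : ε < q)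
    (hae : ∀ᵐ s ∂P, |(MeasureTheory.condExp (tailSigma d k) P voidInd) s - q| ≤ ε) :
    (tailSigma d k ≤ m0) ∧ Integrable voidInd P := by
  haveI hne : (MeasureTheory.ae P).NeBot :=
    MeasureTheory.ae_neBot.mpr (IsProbabilityMeasure.ne_zero P)
  have habs : ¬ (|(0:ℝ) - q| ≤ ε) := by
    rw [zero_sub, abs_neg, abs_of_pos hq]; linarith
  constructor
  · by_contra h
    rw [condExp_of_not_le h] at hae
    obtain ⟨s, hs⟩ := hae.exists
    rw [Pi.zero_apply] at hs
    exact habs hs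
  · by_contra h
    rw [condExp_of_not_integrable h] at hae
    obtain ⟨s, hs⟩ := hae.exists
    rw [Pi.zero_apply] at hs
    exact habs hs

/-- from integrability, produce a measurable a.e.-version of the central void event -/
lemma exists_version (P : Measure (Set (E d))) [IsProbabilityMeasure P]
    (hint : Integrable voidInd P) :
    ∃ C : Set (Set (E d)), MeasurableSet C ∧ C =ᵐ[P] Vc d := by
  have hsm := hint.1
  set f := hsm.mk voidInd with hf
  refine ⟨f ⁻¹' {1}, hsm.stronglyMeasurable_mk.measurable (measurableSet_singleton 1), ?_⟩
  filter_upwards [hsm.ae_eq_mk] with s hs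
  have h1 : (s ∈ f ⁻¹' {1}) ↔ (s ∈ Vc d) := by
    rw [Set.mem_preimage, Set.mem_singleton_iff, hf, ← hs]
    constructor
    · intro h
      by_contra hv
      have : voidInd s = 0 := Set.indicator_of_notMem hv _
      rw [this] at h; norm_num at h
    · intro h
      exact Set.indicator_of_mem h _
  exact eq_iff_iff.mpr h1

lemma q_one_absurd (P : Measure (Set (E d))) [IsProbabilityMeasure P]
    (hstat : ∀ x : E d, Measure.map (shift x) P = P)
    (hempty : P {s : Set (E d) | s = ∅} = 0)
    (hint : Integrable voidInd P) (hq : P (Vc d) = 1) : False := by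
  obtain ⟨C, hCm, hCe⟩ := exists_version P hint
  have hnmV : NullMeasurableSet (Vc d) P := nm_V P hCm hCe
  have hcompl : P ((Vc d)ᶜ) = 0 := by
    rw [measure_compl₀ hnmV (measure_ne_top _ _), hq, measure_univ, tsub_self]
  have hz : ∀ z : Fin d → ℤ, P ((Vv (box z))ᶜ) = 0 := by
    intro z
    rw [Vv_box_eq_preimage, ← Set.preimage_compl]
    rw [shift_meas_eq P hstat _ hnmV.compl]
    exact hcompl
  have hcover : (Set.univ : Set (Set (E d)))
      ⊆ {s : Set (E d) | s = ∅} ∪ ⋃ z : Fin d → ℤ, (Vv (box z))ᶜ := by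
    intro s _
    by_cases hs : s = ∅
    · exact Or.inl hs
    · right
      obtain ⟨u, hu⟩ := Set.nonempty_iff_ne_empty.mpr hs
      obtain ⟨w, hw⟩ := round_cover u
      refine Set.mem_iUnion.mpr ⟨w, ?_⟩
      intro hv
      rw [mem_Vv] at hv
      exact hv u hu hw
  have h1 : (1 : ℝ≥0∞) ≤ 0 := by
    calc (1 : ℝ≥0∞) = P Set.univ := measure_univ.symm
      _ ≤ P ({s : Set (E d) | s = ∅} ∪ ⋃ z : Fin d → ℤ, (Vv (box z))ᶜ) :=
          measure_mono hcover
      _ ≤ P {s : Set (E d) | s = ∅} + P (⋃ z : Fin d → ℤ, (Vv (box z))ᶜ) :=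
          measure_union_le _ _
      _ = 0 := by rw [hempty, measure_iUnion_null hz, add_zero]
  exact absurd h1 (by norm_num)

end St12

open St12 in
set_option maxHeartbeats 2000000 in
/-- if the conditional void probability of `Λ_{1/2}` given the configuration
outside `Λ_k` converges uniformly (in sup norm) to the unconditional void probability, then
void probabilities decay like `e^{-cℓ^d}`. -/
theorem stmt12 (d : ℕ) [MeasurableSpace (Set (E d))]
    (P : Measure (Set (E d))) [IsProbabilityMeasure P]
    (hsimple : P {s | ¬ locFin s} = 0)
    (hstat : ∀ x : E d, Measure.map (shift x) P = P)
    (hempty : P {s | s = ∅} = 0)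
    (hmix : ∀ ε : ℝ, 0 < ε → ∃ K : ℝ, ∀ k : ℝ, K ≤ k →
      ∀ᵐ s ∂P, |MeasureTheory.condExp (tailSigma d k) P voidInd s
          - (P {s : Set (E d) | s ∩ lam0 (1/2) = ∅}).toReal| ≤ ε) :
    ∃ c : ℝ, 0 < c ∧ ∀ ℓ : ℝ, 1 ≤ ℓ →
      P {s | s ∩ lam0 ℓ = ∅} ≤ ENNReal.ofReal (Real.exp (-(c * ℓ ^ d))) := by

  classical
  set p := P {s : Set (E d) | s ∩ lam0 (1/2) = ∅} with hp
  set q := p.toReal with hqdef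
  have hptop : p ≠ ⊤ := measure_ne_top _ _
  have hq1 : q ≤ 1 := by
    rw [hqdef]
    calc p.toReal ≤ (1 : ℝ≥0∞).toReal := ENNReal.toReal_mono one_ne_top prob_le_one
      _ = 1 := by simp
  -- general containment of large-void events in the central void event
  have hZV : ∀ ℓ : ℝ, 1 ≤ ℓ → {s : Set (E d) | s ∩ lam0 ℓ = ∅} ⊆ Vc d := by
    intro ℓ hℓ s hs
    rw [mem_Vv]
    intro u hu hul
    rw [Set.mem_setOf_eq, Set.eq_empty_iff_forall_notMem] at hs
    exact hs u ⟨hu, lam0_mono (by linarith) hul⟩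
  by_cases hq0 : q = 0
  · -- the degenerate case: zero void probability
    refine ⟨1, one_pos, fun ℓ hℓ => ?_⟩
    have hp0 : p = 0 := by
      rcases (ENNReal.toReal_eq_zero_iff p).mp hq0 with h | h
      · exact h
      · exact absurd h hptop
    calc P {s : Set (E d) | s ∩ lam0 ℓ = ∅} ≤ p := measure_mono (hZV ℓ hℓ)
      _ = 0 := hp0
      _ ≤ _ := zero_le
  have hq_pos : 0 < q := lt_of_le_of_ne ENNReal.toReal_nonneg (Ne.symm hq0)
  by_cases hqlt1 : q < 1
  swap
  · -- the degenerate case q = 1 contradicts hempty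
    exfalso
    have hq1' : q = 1 := le_antisymm hq1 (not_lt.mp hqlt1)
    obtain ⟨K, hK⟩ := hmix (1/2) (by norm_num)
    have hae := hK (max K 1) (le_max_left _ _)
    have hforce := force P hq_pos (by rw [hq1']; norm_num) hae
    apply q_one_absurd P hstat hempty hforce.2
    have : p = ENNReal.ofReal q := by rw [hqdef, ENNReal.ofReal_toReal hptop]
    rw [hp] at this
    show P (Vc d) = 1
    calc P (Vc d) = ENNReal.ofReal q := this
      _ = 1 := by rw [hq1']; simp
  -- MAIN CASE : 0 < q < 1
  set ε := min q (1 - q) / 2 with hε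
  have hε_pos : 0 < ε := by
    apply div_pos (lt_min hq_pos (by linarith)); norm_num
  have hε_le_q2 : ε ≤ q / 2 := by
    apply div_le_div_of_nonneg_right (min_le_left _ _)
    norm_num
  have hε_lt_q : ε < q := lt_of_le_of_lt hε_le_q2 (by linarith)
  have hε_le : ε ≤ (1 - q) / 2 := by
    apply div_le_div_of_nonneg_right (min_le_right _ _)
    norm_num
  set γ := q + ε with hγdef
  have hγpos : 0 < γ := by rw [hγdef]; linarith
  have hγ1 : γ < 1 := by rw [hγdef]; linarith
  obtain ⟨K, hK⟩ := hmix ε hε_pos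
  set k := max K 1 with hk
  have hk1 : (1:ℝ) ≤ k := le_max_right _ _
  have hae : ∀ᵐ s ∂P, |(MeasureTheory.condExp (tailSigma d k) P voidInd) s - q| ≤ ε :=
    hK k (le_max_left _ _)
  obtain ⟨hm, hint⟩ := force P hq_pos hε_lt_q hae
  obtain ⟨C, hCm, hCe⟩ := exists_version P hint
  have hφ : ∀ᵐ s ∂P, (MeasureTheory.condExp (tailSigma d k) P voidInd) s ≤ γ := by
    filter_upwards [hae] with s hs
    have := (abs_le.mp hs).2
    rw [hγdef]; linarith
  set K' := ⌈k⌉₊ with hK'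
  have hkK' : k ≤ (K' : ℝ) := Nat.le_ceil k
  set M : ℕ := 2 * K' + 3 with hM
  have hM_pos : (0:ℝ) < (M:ℝ) := by rw [hM]; push_cast; positivity
  have hlogγ : Real.log γ < 0 := Real.log_neg hγpos hγ1
  have hlogq : Real.log q < 0 := Real.log_neg hq_pos hqlt1
  set c₁ := (- Real.log γ) / (4 * (M:ℝ)) ^ d with hc₁
  set c₂ := (- Real.log q) / (2 * (M:ℝ)) ^ d with hc₂
  have hc₁_pos : 0 < c₁ := div_pos (by linarith) (by positivity)
  have hc₂_pos : 0 < c₂ := div_pos (by linarith) (by positivity)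
  refine ⟨min c₁ c₂, lt_min hc₁_pos hc₂_pos, ?_⟩
  intro ℓ hℓ
  have hℓ0 : (0:ℝ) < ℓ := by linarith
  by_cases hcase : ℓ < 2 * (M:ℝ)
  · -- small ℓ : the single-box bound suffices
    have h1 : P {s : Set (E d) | s ∩ lam0 ℓ = ∅} ≤ p := measure_mono (hZV ℓ hℓ)
    have h2 : p = ENNReal.ofReal q := by rw [hqdef, ENNReal.ofReal_toReal hptop]
    have h3 : q ≤ Real.exp (-(min c₁ c₂ * ℓ ^ d)) := by
      rw [← Real.exp_log hq_pos]
      apply Real.exp_le_exp.mpr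
      have hld : ℓ ^ d ≤ (2 * (M:ℝ)) ^ d := by
        apply pow_le_pow_left₀ (by linarith) (by linarith) d
      have h4 : min c₁ c₂ * ℓ ^ d ≤ c₂ * (2*(M:ℝ)) ^ d := by
        apply mul_le_mul (min_le_right _ _) hld (by positivity) hc₂_pos.le
      rw [hc₂, div_mul_cancel₀] at h4
      · linarith
      · positivity
    calc P {s : Set (E d) | s ∩ lam0 ℓ = ∅} ≤ p := h1
      _ = ENNReal.ofReal q := h2
      _ ≤ ENNReal.ofReal (Real.exp (-(min c₁ c₂ * ℓ ^ d))) := ENNReal.ofReal_le_ofReal h3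
  · -- large ℓ : the full recursion
    push_neg at hcase
    set m := ⌊ℓ / (2 * (M:ℝ))⌋₊ with hm_def
    have hx1 : (1:ℝ) ≤ ℓ / (2 * (M:ℝ)) := by
      rw [le_div_iff₀ (by positivity)]; linarith
    have hm1 : 1 ≤ m := by
      rw [hm_def]
      exact Nat.le_floor (by exact_mod_cast hx1)
    have hm_le : (m:ℝ) ≤ ℓ / (2*(M:ℝ)) := Nat.floor_le (by positivity)
    have hm_ge : ℓ / (4*(M:ℝ)) ≤ (m:ℝ) := by
      have h2m : ℓ / (2*(M:ℝ)) < (m:ℝ) + 1 := Nat.lt_floor_add_one _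
      have hm1' : (1:ℝ) ≤ (m:ℝ) := by exact_mod_cast hm1
      have h4 : ℓ / (4*(M:ℝ)) = (ℓ / (2*(M:ℝ))) / 2 := by
        rw [div_div]; congr 1; ring
      rw [h4]
      linarith
    -- the grid of peel points
    set F : Finset (Fin d → ℤ) :=
      (Fintype.piFinset (fun _ : Fin d => Finset.range m)).image
        (fun v => (fun i => (M : ℤ) * (v i : ℤ))) with hF
    have hinj : Function.Injective
        (fun v : Fin d → ℕ => (fun i => (M : ℤ) * (v i : ℤ))) := by
      intro v v' hvv
      funext i
      have h1 := congrFun hvv i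
      simp only at h1
      have hM0 : (M : ℤ) ≠ 0 := by
        rw [hM]; push_cast; omega
      have := mul_left_cancel₀ hM0 h1
      exact_mod_cast this
    have hcard : F.card = m ^ d := by
      rw [hF, Finset.card_image_of_injective _ hinj, Fintype.card_piFinset]
      simp [Finset.card_range]
    -- the grid coordinates lie in [0, M(m-1)]
    have hcoord : ∀ x ∈ F, ∀ i, 0 ≤ x i ∧ x i ≤ (M:ℤ) * (m - 1) := by
      intro x hx i
      rw [hF, Finset.mem_image] at hx
      obtain ⟨v, hv, rfl⟩ := hx
      have hvi : v i < m := by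
        have := Fintype.mem_piFinset.mp hv i
        exact Finset.mem_range.mp this
      constructor
      · positivity
      · have h1 : (v i : ℤ) ≤ (m:ℤ) - 1 := by omega
        have hM0 : (0:ℤ) ≤ (M:ℤ) := by positivity
        calc (M:ℤ) * (v i : ℤ) ≤ (M:ℤ) * ((m:ℤ) - 1) := by
              exact mul_le_mul_of_nonneg_left h1 hM0
          _ = (M:ℤ) * (m - 1) := by push_cast; ring
    -- separation
    have hsep : ∀ x ∈ F, ∀ y ∈ F, x ≠ y → ∃ i, 2 * (K' : ℤ) + 3 ≤ |x i - y i| := by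
      intro x hx y hy hxy
      rw [hF, Finset.mem_image] at hx hy
      obtain ⟨v, hv, rfl⟩ := hx
      obtain ⟨v', hv', rfl⟩ := hy
      have hne : v ≠ v' := fun h => hxy (by rw [h])
      obtain ⟨i, hi⟩ := Function.ne_iff.mp hne
      refine ⟨i, ?_⟩
      have h1 : (M:ℤ) * (v i : ℤ) - (M:ℤ) * (v' i : ℤ) = (M:ℤ) * ((v i : ℤ) - (v' i : ℤ)) := by
        ring
      have h2 : (1:ℤ) ≤ |(v i : ℤ) - (v' i : ℤ)| := by
        have hne2 : (v i : ℤ) - (v' i : ℤ) ≠ 0 := by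
          intro h0
          exact hi (by exact_mod_cast sub_eq_zero.mp h0)
        exact Int.one_le_abs hne2
      have h3 : |(M:ℤ) * ((v i : ℤ) - (v' i : ℤ))| = (M:ℤ) * |(v i : ℤ) - (v' i : ℤ)| := by
        rw [abs_mul, abs_of_nonneg (by positivity : (0:ℤ) ≤ (M:ℤ))]
      have h4 : (M:ℤ) ≤ (M:ℤ) * |(v i : ℤ) - (v' i : ℤ)| := le_mul_of_one_le_right (by positivity) h2
      have h5 : (2 * (K' : ℤ) + 3) = (M:ℤ) := by rw [hM]; push_cast; ring
      show 2 * (K' : ℤ) + 3 ≤ |(M : ℤ) * (v i : ℤ) - (M : ℤ) * (v' i : ℤ)|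
      rw [h1, h3, h5]
      exact h4
    -- the available grid
    set T : Set (Fin d → ℤ) := {w | ∃ x ∈ F, ∀ i, |w i - x i| ≤ (K' : ℤ)} with hT
    have hnb : ∀ x ∈ F, ∀ w : Fin d → ℤ, (∀ i, |w i - x i| ≤ (K' : ℤ)) → w ∈ T :=
      fun x hx w hw => ⟨x, hx, hw⟩
    -- the recursion
    have hrec := recursion P hstat hCm hCe hm hint hγpos.le hφ hkK' (m ^ d) F T hcard hsep hnb
    -- the large-void event is inside Ev T
    have hZT : {s : Set (E d) | s ∩ lam0 ℓ = ∅} ⊆ Ev T := by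
      intro s hs z hz
      rw [Set.eq_empty_iff_forall_notMem]
      rintro u ⟨hus, hub⟩
      rw [Set.mem_setOf_eq, Set.eq_empty_iff_forall_notMem] at hs
      refine hs u ⟨hus, ?_⟩
      intro i
      obtain ⟨x, hx, hwx⟩ := hz
      have h1 : |u i - (z i : ℝ)| ≤ 1/2 := hub i
      have h2 : |(z i : ℝ) - (x i : ℝ)| ≤ (K' : ℝ) := by
        have := hwx i
        rw [← Int.cast_sub, ← Int.cast_abs]
        exact_mod_cast this
      have h3 : |(x i : ℝ)| ≤ (M:ℝ) * ((m:ℝ) - 1) := by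
        obtain ⟨ha, hb⟩ := hcoord x hx i
        rw [abs_of_nonneg (by exact_mod_cast ha)]
        have : ((x i : ℝ)) ≤ ((M:ℤ) * ((m:ℤ) - 1) : ℤ) := by exact_mod_cast hb
        push_cast at this ⊢
        linarith
      have h4 : |u i| ≤ |u i - (z i : ℝ)| + |(z i : ℝ) - (x i : ℝ)| + |(x i : ℝ)| := by
        have := abs_sub_le (u i) ((z i : ℝ)) ((x i : ℝ))
        have h5 := abs_sub_abs_le_abs_sub (u i) ((x i : ℝ))
        have h6 := le_abs_self (|u i| - |(x i : ℝ)|)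
        linarith [abs_sub_le (u i) ((z i : ℝ)) ((x i : ℝ)), le_abs_self (u i - (x i:ℝ)),
          abs_nonneg (u i - (x i:ℝ))]
      -- M m ≤ ℓ/2
      have hMm : (M:ℝ) * (m:ℝ) ≤ ℓ / 2 := by
        have := hm_le
        rw [le_div_iff₀ (by positivity)] at this
        linarith [this]
      have hK'M : (K' : ℝ) + 1/2 + (M:ℝ) * ((m:ℝ)-1) ≤ ℓ := by
        have hMK : (K' : ℝ) + 1/2 ≤ (M:ℝ) := by rw [hM]; push_cast; linarith
        nlinarith [hℓ0]
      linarith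
    -- final arithmetic
    have hfin : P {s : Set (E d) | s ∩ lam0 ℓ = ∅} ≤ (ENNReal.ofReal γ) ^ (m ^ d) :=
      le_trans (measure_mono hZT) hrec
    have hofr : (ENNReal.ofReal γ) ^ (m ^ d) = ENNReal.ofReal (γ ^ (m ^ d)) :=
      (ENNReal.ofReal_pow hγpos.le _).symm
    have hexp : γ ^ (m ^ d) ≤ Real.exp (-(min c₁ c₂ * ℓ ^ d)) := by
      have hγe : γ = Real.exp (Real.log γ) := (Real.exp_log hγpos).symm
      have h1 : γ ^ (m ^ d) = Real.exp (((m ^ d : ℕ) : ℝ) * Real.log γ) := by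
        rw [Real.exp_nat_mul, ← hγe]
      rw [h1]
      apply Real.exp_le_exp.mpr
      -- ((m^d) : ℝ) * log γ ≤ -(c ℓ^d)
      have hmd : (ℓ / (4*(M:ℝ))) ^ d ≤ ((m ^ d : ℕ) : ℝ) := by
        rw [Nat.cast_pow]
        exact pow_le_pow_left₀ (by positivity) hm_ge d
      have h2 : min c₁ c₂ * ℓ ^ d ≤ (- Real.log γ) * ((m ^ d : ℕ) : ℝ) := by
        calc min c₁ c₂ * ℓ ^ d ≤ c₁ * ℓ ^ d := by
              apply mul_le_mul_of_nonneg_right (min_le_left _ _) (by positivity)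
          _ = (- Real.log γ) * (ℓ / (4*(M:ℝ))) ^ d := by
              rw [hc₁, div_pow]; ring
          _ ≤ (- Real.log γ) * ((m ^ d : ℕ) : ℝ) := by
              apply mul_le_mul_of_nonneg_left hmd (by linarith)
      linarith [h2]
    calc P {s : Set (E d) | s ∩ lam0 ℓ = ∅} ≤ (ENNReal.ofReal γ) ^ (m ^ d) := hfin
      _ = ENNReal.ofReal (γ ^ (m ^ d)) := hofr
      _ ≤ ENNReal.ofReal (Real.exp (-(min c₁ c₂ * ℓ ^ d))) := ENNReal.ofReal_le_ofReal hexp
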